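/- For every k ≥ 0, the cubic graph T_k admits no 4-weak bisection. -/

import Mathlib

open SimpleGraph

/-- A cubic graph: every vertex has degree 3. -/
def IsCubic {V : Type*} [Fintype V] (G : SimpleGraph V) : Prop :=
  ∀ v : V, Nat.card (G.neighborSet v) = 3

/-- A circular nowhere-zero `r`-flow: an orientation `dir` of `G` together with
a flow value `f` on each directed edge, with values in `[1, r-1]` and flow
conservation at every vertex. -/
structure CNZF {V : Type*} [Fintype V] (G : SimpleGraph V) (r : ℝ) where
  dir : V → V → Bool
  f : V → V → ℝ
  orients : ∀ u v, G.Adj u v ↔ (dir u v = true ∨ dir v u = true)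
  asymm : ∀ u v, dir u v = true → dir v u = false
  lb : ∀ u v, dir u v = true → 1 ≤ f u v
  ub : ∀ u v, dir u v = true → f u v ≤ r - 1
  conserv : ∀ v : V, (∑ u : V, if dir v u = true then f v u else 0)
      = ∑ u : V, if dir u v = true then f u v else 0

/-- Out-degree of a vertex in an orientation. -/
noncomputable def outDeg {V : Type*} (dir : V → V → Bool) (v : V) : ℕ :=
  Nat.card {u | dir v u = true}

/-- Every connected component of the subgraph induced by `S` is a tree
on at most `m` vertices. -/
def MonoOK {V : Type*} (G : SimpleGraph V) (m : ℕ) (S : Set V) : Prop :=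
  (G.induce S).IsAcyclic ∧
    ∀ c : (G.induce S).ConnectedComponent, Nat.card c.supp ≤ m

/-- A `k`-weak bisection, given by its first part `S`. -/
def IsWeakBisection {V : Type*} [Fintype V] (G : SimpleGraph V) (k : ℕ) (S : Set V) : Prop :=
  Nat.card S = Nat.card (Sᶜ : Set V) ∧ MonoOK G (k-2) S ∧ MonoOK G (k-2) (Sᶜ : Set V)

/-- Every monochromatic component of the 2-coloring `c` has at most `m` vertices. -/
def MonoAtMost {V : Type*} (G : SimpleGraph V) (c : V → Bool) (m : ℕ) : Prop :=
  ∀ b : Bool, ∀ comp : (G.induce {v | c v = b}).ConnectedComponent,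
    Nat.card comp.supp ≤ m

/-- Edges of `L_k` (on vertex labels `0, …, 5+2k`): `L_0` is `K_{3,3}` minus an
edge (parts `{0,1,4}` and `{2,3,5}`, edge `45` removed, degree-2 vertices `4,5`);
at step `j` the two new adjacent vertices `4+2j, 5+2j` are attached to the
previous degree-2 vertices `2+2j, 3+2j`. The degree-2 vertices of `L_k` are
`4+2k` and `5+2k`. -/
def LEdge (k : ℕ) (a b : ℕ) : Prop :=
  (a, b) ∈ ({(0,2),(0,3),(0,5),(1,2),(1,3),(1,5),(4,2),(4,3)} : Set (ℕ × ℕ)) ∨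
  ∃ j, 1 ≤ j ∧ j ≤ k ∧
    ((a, b) = (4+2*j, 5+2*j) ∨ (a, b) = (2+2*j, 4+2*j) ∨ (a, b) = (3+2*j, 5+2*j))

/-- The graph `L_k`. -/
def Lgraph (k : ℕ) : SimpleGraph (Fin (6+2*k)) :=
  SimpleGraph.fromRel (fun a b => LEdge k a.val b.val)

/-- Edges of `T_k`: one copy of `L'_k` (the copy of `L_k` on `0..5+2k` with apex
`6+2k`), two copies of `L'_0` (on `7+2k..12+2k` with apex `13+2k`, and on
`14+2k..19+2k` with apex `20+2k`), and a central vertex `21+2k` adjacent to the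
three apexes. -/
def TEdge (k : ℕ) (a b : ℕ) : Prop :=
  LEdge k a b
  ∨ (a = 6+2*k ∧ (b = 4+2*k ∨ b = 5+2*k))
  ∨ (∃ a' b', LEdge 0 a' b' ∧ a = 7+2*k+a' ∧ b = 7+2*k+b')
  ∨ (a = 13+2*k ∧ (b = 11+2*k ∨ b = 12+2*k))
  ∨ (∃ a' b', LEdge 0 a' b' ∧ a = 14+2*k+a' ∧ b = 14+2*k+b')
  ∨ (a = 20+2*k ∧ (b = 18+2*k ∨ b = 19+2*k))
  ∨ (a = 21+2*k ∧ (b = 6+2*k ∨ b = 13+2*k ∨ b = 20+2*k))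

/-- The cubic graph `T_k`. -/
def Tgraph (k : ℕ) : SimpleGraph (Fin (22+2*k)) :=
  SimpleGraph.fromRel (fun a b => TEdge k a.val b.val)

/-- A valid factor of `G`: a spanning subgraph all of whose components are paths
or cycles (equivalently, all degrees are 1 or 2), such that the two endpoints
(degree-1 vertices) of every odd component are non-adjacent in `G`; in particular
no component is an isolated vertex. -/
def IsValidFactor {V : Type*} (G H : SimpleGraph V) : Prop :=
  H ≤ G ∧
  (∀ v : V, 1 ≤ Nat.card (H.neighborSet v) ∧ Nat.card (H.neighborSet v) ≤ 2) ∧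
  ∀ c : H.ConnectedComponent, Odd (Nat.card c.supp) →
    ∀ u v : V, u ∈ c.supp → v ∈ c.supp → u ≠ v →
      Nat.card (H.neighborSet u) = 1 → Nat.card (H.neighborSet v) = 1 → ¬ G.Adj u v

/-- A component of `H` is a cycle iff all its vertices have degree 2 in `H`. -/
def IsCycleComp {V : Type*} (H : SimpleGraph V) (c : H.ConnectedComponent) : Prop :=
  ∀ v ∈ c.supp, Nat.card (H.neighborSet v) = 2

/-- An odd cycle component. -/
def OddCycleComp {V : Type*} (H : SimpleGraph V) (c : H.ConnectedComponent) : Prop :=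
  Odd (Nat.card c.supp) ∧ IsCycleComp H c

/-- An odd path component (a component with an odd number of vertices containing
a degree-1 vertex). -/
def OddPathComp {V : Type*} (H : SimpleGraph V) (c : H.ConnectedComponent) : Prop :=
  Odd (Nat.card c.supp) ∧ ∃ v ∈ c.supp, Nat.card (H.neighborSet v) = 1

noncomputable def numComponents {V : Type*} (H : SimpleGraph V) : ℕ := Nat.card H.ConnectedComponent

noncomputable def numOddCycles {V : Type*} (H : SimpleGraph V) : ℕ :=
  Nat.card {c : H.ConnectedComponent // OddCycleComp H c}

/-- `H` is a valid factor of `G` with the minimum number of components. -/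
def MinimizesComponents {V : Type*} (G H : SimpleGraph V) : Prop :=
  IsValidFactor G H ∧ ∀ H' : SimpleGraph V, IsValidFactor G H' →
    numComponents H ≤ numComponents H'

/-- `H` is a valid factor of `G` minimizing the number of components and,
subject to that, the number of odd cycles. -/
def IsMinValidFactor {V : Type*} (G H : SimpleGraph V) : Prop :=
  MinimizesComponents G H ∧
  ∀ H' : SimpleGraph V, IsValidFactor G H' →
    numComponents H' = numComponents H → numOddCycles H ≤ numOddCycles H'

/-- An external vertex of a factor: an endpoint of a path component, or a vertex
of an odd cycle component. -/
def ExternalVtx {V : Type*} (H : SimpleGraph V) (v : V) : Prop :=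
  Nat.card (H.neighborSet v) = 1 ∨ OddCycleComp H (H.connectedComponentMk v)

/-- For every k ≥ 0, the cubic graph T_k has no 4-weak bisection. -/


lemma LEdge0_iff (a b : ℕ) : LEdge 0 a b ↔
    ((a=0∧b=2)∨(a=0∧b=3)∨(a=0∧b=5)∨(a=1∧b=2)∨(a=1∧b=3)∨(a=1∧b=5)∨(a=4∧b=2)∨(a=4∧b=3)) := by
  unfold LEdge
  simp [Set.mem_insert_iff, Prod.ext_iff]

lemma LEdge_mono {k : ℕ} {a b : ℕ} (h : LEdge k a b) : LEdge (k+1) a b := by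
  rcases h with h | ⟨j, h1, h2, h3⟩
  · exact Or.inl h
  · exact Or.inr ⟨j, h1, h2.trans (Nat.le_succ k), h3⟩

lemma LEdge_succ_iff (k a b : ℕ) : LEdge (k+1) a b ↔
    LEdge k a b ∨ (a,b) = (6+2*k, 7+2*k) ∨ (a,b) = (4+2*k, 6+2*k) ∨ (a,b) = (5+2*k, 7+2*k) := by
  constructor
  · rintro (h | ⟨j, h1, h2, h3⟩)
    · exact Or.inl (Or.inl h)
    · rcases Nat.lt_or_ge j (k+1) with hj | hj
      · exact Or.inl (Or.inr ⟨j, h1, Nat.lt_succ_iff.mp hj, h3⟩)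
      · have : j = k+1 := le_antisymm h2 hj
        subst this
        rcases h3 with h3 | h3 | h3
        · refine Or.inr (Or.inl ?_); simp only [Prod.ext_iff] at h3 ⊢; omega
        · refine Or.inr (Or.inr (Or.inl ?_)); simp only [Prod.ext_iff] at h3 ⊢; omega
        · refine Or.inr (Or.inr (Or.inr ?_)); simp only [Prod.ext_iff] at h3 ⊢; omega
  · rintro (h | h | h | h)
    · exact LEdge_mono h
    · refine Or.inr ⟨k+1, by omega, le_refl _, Or.inl ?_⟩
      simp only [Prod.ext_iff] at h ⊢; omega
    · refine Or.inr ⟨k+1, by omega, le_refl _, Or.inr (Or.inl ?_)⟩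
      simp only [Prod.ext_iff] at h ⊢; omega
    · refine Or.inr ⟨k+1, by omega, le_refl _, Or.inr (Or.inr ?_)⟩
      simp only [Prod.ext_iff] at h ⊢; omega

lemma LEdge_lt {k a b : ℕ} (h : LEdge k a b) : a < 6+2*k ∧ b < 6+2*k ∧ a ≠ b := by
  rcases h with h | ⟨j, h1, h2, h3⟩
  · simp [Set.mem_insert_iff, Prod.ext_iff] at h
    omega
  · rcases h3 with h3 | h3 | h3 <;> simp [Prod.ext_iff] at h3 <;> omega

/-- No monochromatic path on three vertices. -/
def NoP3 (E : ℕ → ℕ → Prop) (c : ℕ → Bool) : Prop :=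
  ∀ a b d : ℕ, (E a b ∨ E b a) → (E b d ∨ E d b) → a ≠ d →
    ¬(c a = c b ∧ c b = c d)

def cnt (c : ℕ → Bool) (n : ℕ) : ℕ := ∑ i ∈ Finset.range n, if c i then 1 else 0

def edgeB (a b : Fin 6) : Bool :=
  (a.val,b.val) ∈ [((0:ℕ),(2:ℕ)),(0,3),(0,5),(1,2),(1,3),(1,5),(4,2),(4,3)]

lemma base_dec : ∀ f : Fin 6 → Bool,
    (∀ a b d : Fin 6, (edgeB a b || edgeB b a) = true → (edgeB b d || edgeB d b) = true →
      a ≠ d → ¬(f a = f b ∧ f b = f d)) →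
    ((if f 0 then 1 else 0) + (if f 1 then 1 else 0) + (if f 2 then 1 else 0)
      + (if f 3 then 1 else 0) + (if f 4 then 1 else 0) + (if f 5 then 1 else 0) = 3
      ∧ f 4 ≠ f 5) := by decide

lemma edgeB_to_LEdge : ∀ a b : Fin 6, edgeB a b = true → LEdge 0 a.val b.val := by
  have h : ∀ a b : Fin 6, edgeB a b = true →
      ((a.val=0∧b.val=2)∨(a.val=0∧b.val=3)∨(a.val=0∧b.val=5)∨(a.val=1∧b.val=2)∨
       (a.val=1∧b.val=3)∨(a.val=1∧b.val=5)∨(a.val=4∧b.val=2)∨(a.val=4∧b.val=3)) := by decide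
  intro a b hab
  exact (LEdge0_iff a.val b.val).mpr (h a b hab)

lemma cnt_six (c : ℕ → Bool) : cnt c 6 =
    (if c 0 then 1 else 0) + (if c 1 then 1 else 0) + (if c 2 then 1 else 0)
      + (if c 3 then 1 else 0) + (if c 4 then 1 else 0) + (if c 5 then 1 else 0) := by
  simp only [cnt, Finset.sum_range_succ, Finset.sum_range_zero]
  omega

lemma Lkey_base (c : ℕ → Bool) (h : NoP3 (LEdge 0) c) : cnt c 6 = 3 ∧ c 4 ≠ c 5 := by
  set f : Fin 6 → Bool := fun i => c i.val with hf
  have hyp : ∀ a b d : Fin 6, (edgeB a b || edgeB b a) = true →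
      (edgeB b d || edgeB d b) = true → a ≠ d → ¬(f a = f b ∧ f b = f d) := by
    intro a b d h1 h2 hne
    rcases Bool.or_eq_true_iff.mp h1 with h1 | h1 <;>
    rcases Bool.or_eq_true_iff.mp h2 with h2 | h2 <;>
    exact h a.val b.val d.val
      (by first | exact Or.inl (edgeB_to_LEdge _ _ h1) | exact Or.inr (edgeB_to_LEdge _ _ h1))
      (by first | exact Or.inl (edgeB_to_LEdge _ _ h2) | exact Or.inr (edgeB_to_LEdge _ _ h2))
      (fun hv => hne (Fin.val_injective hv))
  have := base_dec f hyp
  rw [cnt_six]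
  exact this

lemma Lkey (k : ℕ) (c : ℕ → Bool) (h : NoP3 (LEdge k) c) :
    cnt c (6+2*k) = 3+k ∧ c (4+2*k) ≠ c (5+2*k) := by
  induction k with
  | zero => simpa using Lkey_base c h
  | succ k ih =>
    have hk : NoP3 (LEdge k) c := by
      intro a b d h1 h2 hne
      exact h a b d (h1.imp LEdge_mono LEdge_mono) (h2.imp LEdge_mono LEdge_mono) hne
    obtain ⟨hcnt, hne45⟩ := ih hk
    -- the three new edges
    have e1 : LEdge (k+1) (6+2*k) (7+2*k) := by
      rw [LEdge_succ_iff]; right; left; rfl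
    have e2 : LEdge (k+1) (4+2*k) (6+2*k) := by
      rw [LEdge_succ_iff]; right; right; left; rfl
    have e3 : LEdge (k+1) (5+2*k) (7+2*k) := by
      rw [LEdge_succ_iff]; right; right; right; rfl
    have huv : c (6+2*k) ≠ c (7+2*k) := by
      intro heq
      rcases Bool.eq_or_eq_not (c (4+2*k)) (c (6+2*k)) with h4 | h4
      · exact h (4+2*k) (6+2*k) (7+2*k) (Or.inl e2) (Or.inl e1) (by omega) ⟨h4, heq⟩
      · have h5 : c (5+2*k) = c (7+2*k) := by
          rcases Bool.eq_or_eq_not (c (5+2*k)) (c (7+2*k)) with h5 | h5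
          · exact h5
          · exfalso; apply hne45; rw [h4, h5, heq]
        exact h (5+2*k) (7+2*k) (6+2*k) (Or.inl e3) (Or.inr e1) (by omega) ⟨h5, heq.symm⟩
    constructor
    · have h1 : 6+2*(k+1) = (7+2*k)+1 := by ring
      have h2 : 7+2*k = (6+2*k)+1 := by ring
      rw [show cnt c (6+2*(k+1)) = cnt c (7+2*k) + (if c (7+2*k) then 1 else 0) by
            rw [cnt, cnt, h1, Finset.sum_range_succ],
          show cnt c (7+2*k) = cnt c (6+2*k) + (if c (6+2*k) then 1 else 0) by
            rw [cnt, cnt, h2, Finset.sum_range_succ], hcnt]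
      rcases Bool.eq_false_or_eq_true (c (6+2*k)) with h6 | h6 <;>
        [skip; skip] <;>
        · have h7 := huv
          rw [h6] at h7 ⊢
          simp at h7
          rw [h7]
          simp; omega
    · have e4 : (4+2*(k+1) : ℕ) = 6+2*k := by ring
      have e5 : (5+2*(k+1) : ℕ) = 7+2*k := by ring
      rw [e4, e5]; exact huv


lemma noP3_of_mono {V : Type*} [Fintype V] (G : SimpleGraph V) (c : V → Bool)
    (h : MonoAtMost G c 2) :
    ∀ a b d : V, G.Adj a b → G.Adj b d → a ≠ d → ¬(c a = c b ∧ c b = c d) := by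
  classical
  rintro a b d hab hbd had ⟨h1, h2⟩
  have ha : a ∈ {v | c v = c b} := h1
  have hb : b ∈ {v | c v = c b} := rfl
  have hd : d ∈ {v | c v = c b} := h2.symm
  set G' := G.induce {v | c v = c b} with hG'
  have hadj1 : G'.Adj ⟨a, ha⟩ ⟨b, hb⟩ := hab
  have hadj2 : G'.Adj ⟨b, hb⟩ ⟨d, hd⟩ := hbd
  set comp := G'.connectedComponentMk ⟨b, hb⟩ with hcomp
  have hma : (⟨a, ha⟩ : {v | c v = c b}) ∈ comp.supp := by
    simp only [SimpleGraph.ConnectedComponent.mem_supp_iff, hcomp]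
    exact SimpleGraph.ConnectedComponent.sound hadj1.reachable
  have hmb : (⟨b, hb⟩ : {v | c v = c b}) ∈ comp.supp := by
    simp only [SimpleGraph.ConnectedComponent.mem_supp_iff, hcomp]
  have hmd : (⟨d, hd⟩ : {v | c v = c b}) ∈ comp.supp := by
    simp only [SimpleGraph.ConnectedComponent.mem_supp_iff, hcomp]
    exact SimpleGraph.ConnectedComponent.sound hadj2.symm.reachable
  have hne1 : (⟨a, ha⟩ : {v | c v = c b}) ≠ ⟨b, hb⟩ :=
    fun h => hab.ne (congrArg Subtype.val h)
  have hne2 : (⟨b, hb⟩ : {v | c v = c b}) ≠ ⟨d, hd⟩ :=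
    fun h => hbd.ne (congrArg Subtype.val h)
  have hne3 : (⟨a, ha⟩ : {v | c v = c b}) ≠ ⟨d, hd⟩ :=
    fun h => had (congrArg Subtype.val h)
  have hsub : ({⟨a, ha⟩, ⟨b, hb⟩, ⟨d, hd⟩} : Set {v | c v = c b}) ⊆ comp.supp := by
    intro x hx
    rcases hx with hx | hx | hx <;> subst hx <;> assumption
  have hfin : (comp.supp : Set {v | c v = c b}).Finite := Set.toFinite _
  have h3 : 3 ≤ (comp.supp : Set {v | c v = c b}).ncard := by
    have h33 : ({⟨a, ha⟩, ⟨b, hb⟩, ⟨d, hd⟩} : Set {v | c v = c b}).ncard = 3 := by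
      rw [Set.ncard_insert_of_notMem (by simp [hne1, hne3]),
          Set.ncard_insert_of_notMem (by simp [hne2]), Set.ncard_singleton]
    calc 3 = ({⟨a, ha⟩, ⟨b, hb⟩, ⟨d, hd⟩} : Set {v | c v = c b}).ncard := h33.symm
    _ ≤ _ := Set.ncard_le_ncard hsub hfin
  have hle := h (c b) comp
  rw [Nat.card_coe_set_eq] at hle
  omega


lemma TEdge_of_LEdge {k a b : ℕ} (h : LEdge k a b) : TEdge k a b := Or.inl h

theorem stmt5 (k : ℕ) :
    ¬ ∃ c : Fin (22+2*k) → Bool,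
      Nat.card {v | c v = true} = Nat.card {v | c v = false} ∧
        MonoAtMost (Tgraph k) c 2 := by
  rintro ⟨c, hbal, hmono⟩
  classical
  set c' : ℕ → Bool := fun n => if h : n < 22+2*k then c ⟨n, h⟩ else false with hc'
  have key : ∀ a b d : ℕ, a < 22+2*k → b < 22+2*k → d < 22+2*k →
      a ≠ b → b ≠ d → a ≠ d → (TEdge k a b ∨ TEdge k b a) → (TEdge k b d ∨ TEdge k d b) →
      ¬(c' a = c' b ∧ c' b = c' d) := by
    intro a b d ha hb hd hab hbd had he1 he2 hcc
    have hA1 : (Tgraph k).Adj ⟨a, ha⟩ ⟨b, hb⟩ := by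
      rw [Tgraph, SimpleGraph.fromRel_adj]
      exact ⟨by simpa [Fin.ext_iff] using hab, he1⟩
    have hA2 : (Tgraph k).Adj ⟨b, hb⟩ ⟨d, hd⟩ := by
      rw [Tgraph, SimpleGraph.fromRel_adj]
      exact ⟨by simpa [Fin.ext_iff] using hbd, he2⟩
    refine noP3_of_mono _ c hmono ⟨a, ha⟩ ⟨b, hb⟩ ⟨d, hd⟩ hA1 hA2
      (by simpa [Fin.ext_iff] using had) ?_
    have ea : c' a = c ⟨a, ha⟩ := dif_pos ha
    have eb : c' b = c ⟨b, hb⟩ := dif_pos hb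
    have ed : c' d = c ⟨d, hd⟩ := dif_pos hd
    rw [← ea, ← eb, ← ed]
    exact hcc
  -- NoP3 for the main L_k block
  have h1 : NoP3 (LEdge k) c' := by
    intro a b d he1 he2 had
    have hb1 : a < 6+2*k ∧ b < 6+2*k ∧ a ≠ b := by
      rcases he1 with h | h
      · exact LEdge_lt h
      · obtain ⟨x, y, z⟩ := LEdge_lt h; exact ⟨y, x, z.symm⟩
    have hb2 : b < 6+2*k ∧ d < 6+2*k ∧ b ≠ d := by
      rcases he2 with h | h
      · exact LEdge_lt h
      · obtain ⟨x, y, z⟩ := LEdge_lt h; exact ⟨y, x, z.symm⟩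
    exact key a b d (by omega) (by omega) (by omega) hb1.2.2 hb2.2.2 had
      (he1.imp TEdge_of_LEdge TEdge_of_LEdge) (he2.imp TEdge_of_LEdge TEdge_of_LEdge)
  set c1 : ℕ → Bool := fun n => c' (7+2*k+n) with hc1
  set c2 : ℕ → Bool := fun n => c' (14+2*k+n) with hc2
  have h2 : NoP3 (LEdge 0) c1 := by
    intro a b d he1 he2 had
    have hb1 : a < 6 ∧ b < 6 ∧ a ≠ b := by
      rcases he1 with h | h
      · simpa using LEdge_lt h
      · obtain ⟨x, y, z⟩ := LEdge_lt h
        exact ⟨by omega, by omega, z.symm⟩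
    have hb2 : b < 6 ∧ d < 6 ∧ b ≠ d := by
      rcases he2 with h | h
      · simpa using LEdge_lt h
      · obtain ⟨x, y, z⟩ := LEdge_lt h
        exact ⟨by omega, by omega, z.symm⟩
    refine key (7+2*k+a) (7+2*k+b) (7+2*k+d) (by omega) (by omega) (by omega)
      (by omega) (by omega) (by omega) ?_ ?_
    · exact he1.imp (fun h => Or.inr (Or.inr (Or.inl ⟨a, b, h, rfl, rfl⟩)))
        (fun h => Or.inr (Or.inr (Or.inl ⟨b, a, h, rfl, rfl⟩)))
    · exact he2.imp (fun h => Or.inr (Or.inr (Or.inl ⟨b, d, h, rfl, rfl⟩)))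
        (fun h => Or.inr (Or.inr (Or.inl ⟨d, b, h, rfl, rfl⟩)))
  have h3 : NoP3 (LEdge 0) c2 := by
    intro a b d he1 he2 had
    have hb1 : a < 6 ∧ b < 6 ∧ a ≠ b := by
      rcases he1 with h | h
      · simpa using LEdge_lt h
      · obtain ⟨x, y, z⟩ := LEdge_lt h
        exact ⟨by omega, by omega, z.symm⟩
    have hb2 : b < 6 ∧ d < 6 ∧ b ≠ d := by
      rcases he2 with h | h
      · simpa using LEdge_lt h
      · obtain ⟨x, y, z⟩ := LEdge_lt h
        exact ⟨by omega, by omega, z.symm⟩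
    refine key (14+2*k+a) (14+2*k+b) (14+2*k+d) (by omega) (by omega) (by omega)
      (by omega) (by omega) (by omega) ?_ ?_
    · exact he1.imp (fun h => Or.inr (Or.inr (Or.inr (Or.inr (Or.inl ⟨a, b, h, rfl, rfl⟩)))))
        (fun h => Or.inr (Or.inr (Or.inr (Or.inr (Or.inl ⟨b, a, h, rfl, rfl⟩)))))
    · exact he2.imp (fun h => Or.inr (Or.inr (Or.inr (Or.inr (Or.inl ⟨b, d, h, rfl, rfl⟩)))))
        (fun h => Or.inr (Or.inr (Or.inr (Or.inr (Or.inl ⟨d, b, h, rfl, rfl⟩)))))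
  obtain ⟨B1c, B1ne⟩ := Lkey k c' h1
  obtain ⟨B2c, B2ne⟩ := Lkey 0 c1 h2
  obtain ⟨B3c, B3ne⟩ := Lkey 0 c2 h3
  -- translate the degree-2 colour facts for the two small blocks
  have B2ne' : c' (11+2*k) ≠ c' (12+2*k) := by
    have e4 : c1 4 = c' (11+2*k) := congrArg c' (by ring)
    have e5 : c1 5 = c' (12+2*k) := congrArg c' (by ring)
    rw [← e4, ← e5]; exact B2ne
  have B3ne' : c' (18+2*k) ≠ c' (19+2*k) := by
    have e4 : c2 4 = c' (18+2*k) := congrArg c' (by ring)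
    have e5 : c2 5 = c' (19+2*k) := congrArg c' (by ring)
    rw [← e4, ← e5]; exact B3ne
  -- TEdge facts
  have tE1a : TEdge k (6+2*k) (4+2*k) := Or.inr (Or.inl ⟨rfl, Or.inl rfl⟩)
  have tE1b : TEdge k (6+2*k) (5+2*k) := Or.inr (Or.inl ⟨rfl, Or.inr rfl⟩)
  have tE2a : TEdge k (13+2*k) (11+2*k) := Or.inr (Or.inr (Or.inr (Or.inl ⟨rfl, Or.inl rfl⟩)))
  have tE2b : TEdge k (13+2*k) (12+2*k) := Or.inr (Or.inr (Or.inr (Or.inl ⟨rfl, Or.inr rfl⟩)))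
  have tE3a : TEdge k (20+2*k) (18+2*k) :=
    Or.inr (Or.inr (Or.inr (Or.inr (Or.inr (Or.inl ⟨rfl, Or.inl rfl⟩)))))
  have tE3b : TEdge k (20+2*k) (19+2*k) :=
    Or.inr (Or.inr (Or.inr (Or.inr (Or.inr (Or.inl ⟨rfl, Or.inr rfl⟩)))))
  have tEz1 : TEdge k (21+2*k) (6+2*k) :=
    Or.inr (Or.inr (Or.inr (Or.inr (Or.inr (Or.inr ⟨rfl, Or.inl rfl⟩)))))
  have tEz2 : TEdge k (21+2*k) (13+2*k) :=
    Or.inr (Or.inr (Or.inr (Or.inr (Or.inr (Or.inr ⟨rfl, Or.inr (Or.inl rfl)⟩)))))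
  have tEz3 : TEdge k (21+2*k) (20+2*k) :=
    Or.inr (Or.inr (Or.inr (Or.inr (Or.inr (Or.inr ⟨rfl, Or.inr (Or.inr rfl)⟩)))))
  -- centre colour differs from each apex colour
  have hw1 : c' (21+2*k) ≠ c' (6+2*k) := by
    intro heq
    rcases Bool.eq_or_eq_not (c' (6+2*k)) (c' (4+2*k)) with hx | hx
    · exact key (21+2*k) (6+2*k) (4+2*k) (by omega) (by omega) (by omega)
        (by omega) (by omega) (by omega) (Or.inl tEz1) (Or.inl tE1a) ⟨heq, hx⟩
    · have hy : c' (6+2*k) = c' (5+2*k) := by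
        revert hx B1ne
        cases c' (4+2*k) <;> cases c' (5+2*k) <;> cases c' (6+2*k) <;> simp
      exact key (21+2*k) (6+2*k) (5+2*k) (by omega) (by omega) (by omega)
        (by omega) (by omega) (by omega) (Or.inl tEz1) (Or.inl tE1b) ⟨heq, hy⟩
  have hw2 : c' (21+2*k) ≠ c' (13+2*k) := by
    intro heq
    rcases Bool.eq_or_eq_not (c' (13+2*k)) (c' (11+2*k)) with hx | hx
    · exact key (21+2*k) (13+2*k) (11+2*k) (by omega) (by omega) (by omega)
        (by omega) (by omega) (by omega) (Or.inl tEz2) (Or.inl tE2a) ⟨heq, hx⟩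
    · have hy : c' (13+2*k) = c' (12+2*k) := by
        revert hx B2ne'
        cases c' (11+2*k) <;> cases c' (12+2*k) <;> cases c' (13+2*k) <;> simp
      exact key (21+2*k) (13+2*k) (12+2*k) (by omega) (by omega) (by omega)
        (by omega) (by omega) (by omega) (Or.inl tEz2) (Or.inl tE2b) ⟨heq, hy⟩
  have hw3 : c' (21+2*k) ≠ c' (20+2*k) := by
    intro heq
    rcases Bool.eq_or_eq_not (c' (20+2*k)) (c' (18+2*k)) with hx | hx
    · exact key (21+2*k) (20+2*k) (18+2*k) (by omega) (by omega) (by omega)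
        (by omega) (by omega) (by omega) (Or.inl tEz3) (Or.inl tE3a) ⟨heq, hx⟩
    · have hy : c' (20+2*k) = c' (19+2*k) := by
        revert hx B3ne'
        cases c' (18+2*k) <;> cases c' (19+2*k) <;> cases c' (20+2*k) <;> simp
      exact key (21+2*k) (20+2*k) (19+2*k) (by omega) (by omega) (by omega)
        (by omega) (by omega) (by omega) (Or.inl tEz3) (Or.inl tE3b) ⟨heq, hy⟩
  -- counting
  have hcard : ∀ b : Bool, Nat.card {v : Fin (22+2*k) | c v = b} =
      ∑ i ∈ Finset.range (22+2*k), (if c' i = b then 1 else 0) := by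
    intro b
    rw [Nat.card_eq_fintype_card]
    rw [Fintype.card_subtype]
    rw [Finset.card_filter]
    rw [← Fin.sum_univ_eq_sum_range (fun i => if c' i = b then 1 else 0) (22+2*k)]
    refine Finset.sum_congr rfl fun v _ => ?_
    have h2 : c' v.val = c v := by
      simp only [hc', v.isLt, dif_pos, Fin.eta]
    rw [h2]
    simp [Set.mem_setOf_eq]
  have hsum : (∑ i ∈ Finset.range (22+2*k), (if c' i = true then 1 else 0)) +
      (∑ i ∈ Finset.range (22+2*k), (if c' i = false then 1 else 0)) = 22+2*k := by
    rw [← Finset.sum_add_distrib]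
    have e : ∀ i ∈ Finset.range (22+2*k),
        ((if c' i = true then 1 else 0) + (if c' i = false then 1 else 0)) = 1 := by
      intro i _; cases c' i <;> simp
    rw [Finset.sum_congr rfl e]
    simp
  have hbal2 : 2 * cnt c' (22+2*k) = 22+2*k := by
    have hT : Nat.card {v : Fin (22+2*k) | c v = true} = cnt c' (22+2*k) := hcard true
    have hF := hcard false
    have hs : cnt c' (22+2*k) +
        (∑ i ∈ Finset.range (22+2*k), (if c' i = false then 1 else 0)) = 22+2*k := hsum
    omega

  have s7 : cnt c' (7+2*k) = cnt c' (6+2*k) + (if c' (6+2*k) then 1 else 0) := by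
    rw [cnt, cnt, show (7+2*k : ℕ) = (6+2*k)+1 from by ring, Finset.sum_range_succ]
  have s8 : cnt c' (8+2*k) = cnt c' (7+2*k) + (if c' (7+2*k) then 1 else 0) := by
    rw [cnt, cnt, show (8+2*k : ℕ) = (7+2*k)+1 from by ring, Finset.sum_range_succ]
  have s9 : cnt c' (9+2*k) = cnt c' (8+2*k) + (if c' (8+2*k) then 1 else 0) := by
    rw [cnt, cnt, show (9+2*k : ℕ) = (8+2*k)+1 from by ring, Finset.sum_range_succ]
  have s10 : cnt c' (10+2*k) = cnt c' (9+2*k) + (if c' (9+2*k) then 1 else 0) := by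
    rw [cnt, cnt, show (10+2*k : ℕ) = (9+2*k)+1 from by ring, Finset.sum_range_succ]
  have s11 : cnt c' (11+2*k) = cnt c' (10+2*k) + (if c' (10+2*k) then 1 else 0) := by
    rw [cnt, cnt, show (11+2*k : ℕ) = (10+2*k)+1 from by ring, Finset.sum_range_succ]
  have s12 : cnt c' (12+2*k) = cnt c' (11+2*k) + (if c' (11+2*k) then 1 else 0) := by
    rw [cnt, cnt, show (12+2*k : ℕ) = (11+2*k)+1 from by ring, Finset.sum_range_succ]
  have s13 : cnt c' (13+2*k) = cnt c' (12+2*k) + (if c' (12+2*k) then 1 else 0) := by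
    rw [cnt, cnt, show (13+2*k : ℕ) = (12+2*k)+1 from by ring, Finset.sum_range_succ]
  have s14 : cnt c' (14+2*k) = cnt c' (13+2*k) + (if c' (13+2*k) then 1 else 0) := by
    rw [cnt, cnt, show (14+2*k : ℕ) = (13+2*k)+1 from by ring, Finset.sum_range_succ]
  have s15 : cnt c' (15+2*k) = cnt c' (14+2*k) + (if c' (14+2*k) then 1 else 0) := by
    rw [cnt, cnt, show (15+2*k : ℕ) = (14+2*k)+1 from by ring, Finset.sum_range_succ]
  have s16 : cnt c' (16+2*k) = cnt c' (15+2*k) + (if c' (15+2*k) then 1 else 0) := by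
    rw [cnt, cnt, show (16+2*k : ℕ) = (15+2*k)+1 from by ring, Finset.sum_range_succ]
  have s17 : cnt c' (17+2*k) = cnt c' (16+2*k) + (if c' (16+2*k) then 1 else 0) := by
    rw [cnt, cnt, show (17+2*k : ℕ) = (16+2*k)+1 from by ring, Finset.sum_range_succ]
  have s18 : cnt c' (18+2*k) = cnt c' (17+2*k) + (if c' (17+2*k) then 1 else 0) := by
    rw [cnt, cnt, show (18+2*k : ℕ) = (17+2*k)+1 from by ring, Finset.sum_range_succ]
  have s19 : cnt c' (19+2*k) = cnt c' (18+2*k) + (if c' (18+2*k) then 1 else 0) := by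
    rw [cnt, cnt, show (19+2*k : ℕ) = (18+2*k)+1 from by ring, Finset.sum_range_succ]
  have s20 : cnt c' (20+2*k) = cnt c' (19+2*k) + (if c' (19+2*k) then 1 else 0) := by
    rw [cnt, cnt, show (20+2*k : ℕ) = (19+2*k)+1 from by ring, Finset.sum_range_succ]
  have s21 : cnt c' (21+2*k) = cnt c' (20+2*k) + (if c' (20+2*k) then 1 else 0) := by
    rw [cnt, cnt, show (21+2*k : ℕ) = (20+2*k)+1 from by ring, Finset.sum_range_succ]
  have s22 : cnt c' (22+2*k) = cnt c' (21+2*k) + (if c' (21+2*k) then 1 else 0) := by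
    rw [cnt, cnt, show (22+2*k : ℕ) = (21+2*k)+1 from by ring, Finset.sum_range_succ]
  have Bs2 : (if c' (7+2*k) then 1 else 0) + (if c' (8+2*k) then 1 else 0) + (if c' (9+2*k) then 1 else 0) + (if c' (10+2*k) then 1 else 0) + (if c' (11+2*k) then 1 else 0) + (if c' (12+2*k) then 1 else 0) = 3 := by
    have t0 : c1 0 = c' (7+2*k) := congrArg c' (by ring)
    have t1 : c1 1 = c' (8+2*k) := congrArg c' (by ring)
    have t2 : c1 2 = c' (9+2*k) := congrArg c' (by ring)
    have t3 : c1 3 = c' (10+2*k) := congrArg c' (by ring)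
    have t4 : c1 4 = c' (11+2*k) := congrArg c' (by ring)
    have t5 : c1 5 = c' (12+2*k) := congrArg c' (by ring)
    rw [← t0, ← t1, ← t2, ← t3, ← t4, ← t5, ← cnt_six]
    exact B2c
  have Bs3 : (if c' (14+2*k) then 1 else 0) + (if c' (15+2*k) then 1 else 0) + (if c' (16+2*k) then 1 else 0) + (if c' (17+2*k) then 1 else 0) + (if c' (18+2*k) then 1 else 0) + (if c' (19+2*k) then 1 else 0) = 3 := by
    have t0 : c2 0 = c' (14+2*k) := congrArg c' (by ring)
    have t1 : c2 1 = c' (15+2*k) := congrArg c' (by ring)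
    have t2 : c2 2 = c' (16+2*k) := congrArg c' (by ring)
    have t3 : c2 3 = c' (17+2*k) := congrArg c' (by ring)
    have t4 : c2 4 = c' (18+2*k) := congrArg c' (by ring)
    have t5 : c2 5 = c' (19+2*k) := congrArg c' (by ring)
    rw [← t0, ← t1, ← t2, ← t3, ← t4, ← t5, ← cnt_six]
    exact B3c
  -- pair facts: centre + apex contribute exactly 1
  have p1 : (if c' (21+2*k) then 1 else 0) + (if c' (6+2*k) then 1 else 0) = 1 := by
    revert hw1; cases c' (21+2*k) <;> cases c' (6+2*k) <;> simp
  have p2 : (if c' (21+2*k) then 1 else 0) + (if c' (13+2*k) then 1 else 0) = 1 := by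
    revert hw2; cases c' (21+2*k) <;> cases c' (13+2*k) <;> simp
  have p3 : (if c' (21+2*k) then 1 else 0) + (if c' (20+2*k) then 1 else 0) = 1 := by
    revert hw3; cases c' (21+2*k) <;> cases c' (20+2*k) <;> simp
  omega
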